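/- For a complex eigenvalue pair λ, λ* of C with Jordan real-form block J = [[Re λ, −Im λ],[Im λ, Re λ]], the characteristic function of the 4-dimensional subsystem factors as det(sI₄ − I₂⊗A₀ − J⊗B_P e^{−τ₁s} − J⊗B_D e^{−τ₂s}) = s⁴ + 2Ds³ + (D²+2P)s² + 2DPs + P² − 2Re(λ)(s²+Ds+P)(Ds e^{−τ₂s}+P e^{−τ₁s}) + |λ|²(Ds e^{−τ₂s}+P e^{−τ₁s})². -/

import Mathlib

set_option maxHeartbeats 4000000


open Kronecker

/-- Characteristic function of the 4-dimensional subsystem associated with a complex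
eigenvalue pair of C, in terms of the Jordan real-form block J. -/
theorem stmt_6 (P D : ℝ) (lam : ℂ) (τ₁ τ₂ : ℝ) (hτ₁ : 0 ≤ τ₁) (hτ₂ : 0 ≤ τ₂) (s : ℂ) :
    let A₀ : Matrix (Fin 2) (Fin 2) ℂ := !![0, 1; -(P : ℂ), -(D : ℂ)]
    let BP : Matrix (Fin 2) (Fin 2) ℂ := !![0, 0; (P : ℂ), 0]
    let BD : Matrix (Fin 2) (Fin 2) ℂ := !![0, 0; 0, (D : ℂ)]
    let J : Matrix (Fin 2) (Fin 2) ℂ :=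
      !![(lam.re : ℂ), -(lam.im : ℂ); (lam.im : ℂ), (lam.re : ℂ)]
    let h : ℂ := (D : ℂ) * s * Complex.exp (-(τ₂ : ℂ) * s)
      + (P : ℂ) * Complex.exp (-(τ₁ : ℂ) * s)
    Matrix.det (s • (1 : Matrix (Fin 2 × Fin 2) (Fin 2 × Fin 2) ℂ)
        - (1 : Matrix (Fin 2) (Fin 2) ℂ) ⊗ₖ A₀
        - Complex.exp (-(τ₁ : ℂ) * s) • (J ⊗ₖ BP)
        - Complex.exp (-(τ₂ : ℂ) * s) • (J ⊗ₖ BD))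
      = s ^ 4 + 2 * (D : ℂ) * s ^ 3 + ((D : ℂ) ^ 2 + 2 * (P : ℂ)) * s ^ 2
        + 2 * (D : ℂ) * (P : ℂ) * s + (P : ℂ) ^ 2
        - 2 * (lam.re : ℂ) * (s ^ 2 + (D : ℂ) * s + (P : ℂ)) * h
        + ((‖lam‖ : ℝ) : ℂ) ^ 2 * h ^ 2 := by
  intro A₀ BP BD J h
  have habs : ((‖lam‖ : ℝ) : ℂ) ^ 2 = (lam.re : ℂ)^2 + (lam.im : ℂ)^2 := by
    rw [← Complex.ofReal_pow, Complex.sq_norm, Complex.normSq_apply]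
    push_cast; ring
  rw [habs]
  set a : ℂ := (lam.re : ℂ) with ha
  set b : ℂ := (lam.im : ℂ) with hb
  set e1 : ℂ := Complex.exp (-(τ₁ : ℂ) * s) with he1
  set e2 : ℂ := Complex.exp (-(τ₂ : ℂ) * s) with he2
  rw [← Matrix.det_reindex_self finProdFinEquiv]
  have hM : (Matrix.reindex finProdFinEquiv finProdFinEquiv)
      (s • (1 : Matrix (Fin 2 × Fin 2) (Fin 2 × Fin 2) ℂ)
        - (1 : Matrix (Fin 2) (Fin 2) ℂ) ⊗ₖ A₀ - e1 • (J ⊗ₖ BP) - e2 • (J ⊗ₖ BD))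
      = !![s, -1, 0, 0;
           (P : ℂ) - a*P*e1, s + D - a*D*e2, b*P*e1, b*D*e2;
           0, 0, s, -1;
           -(b*P*e1), -(b*D*e2), (P : ℂ) - a*P*e1, s + D - a*D*e2] := by
    ext i j
    fin_cases i <;> fin_cases j <;>
      simp [Matrix.reindex_apply, Matrix.submatrix_apply, Matrix.kroneckerMap_apply,
        Matrix.one_apply, finProdFinEquiv, Fin.divNat, Fin.modNat, show ((2:Fin 4):ℕ)=2 from rfl, show ((3:Fin 4):ℕ)=3 from rfl, A₀, BP, BD, J, Prod.ext_iff, Fin.ext_iff] <;> norm_num <;> ring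
  rw [hM]
  simp [Matrix.det_succ_row_zero, Fin.sum_univ_succ, h, he1, he2, show (Fin.succAbove 1 2 : Fin 4) = 3 from rfl]
  ring
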